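/- Let N ≥ 2, ω = exp(2πi/N), and let V(α, β, μ) be the N-dimensional module over quantum sl₂ at ξ = exp(πi/N) defined via φ and the cyclic Weyl module, with K v_n = ω^{α-n} v_n, and suppose ω^{N(μ-α)} ≠ 1 and ω^{N(μ+α)} ≠ 1 (so α ≢ ±μ mod N relative to N-th powers). Then V(α,β,μ) is a simple U_ξ(sl₂)-module. -/

import Mathlib

open Complex

/-- Simplicity of the cyclic module `V(α,β,μ)`: with `ξ = exp(πi/N)`,
`ω^ζ = exp(2πiζ/N)`, the `U_ξ(sl₂)`-module structure on `ℂ^N` obtained via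
`φ(K) = x`, `φ(E) = ξ y (z - x)`, `φ(F) = y⁻¹(1 - z⁻¹x⁻¹)` from
`x v_n = ω^{α-n} v_n`, `y v_n = ω^β v_{n-1}`, `z v_n = ω^μ v_n` (written here in
coordinates) has no proper nonzero submodule, provided `ω^{N(μ-α)} ≠ 1` and
`ω^{N(μ+α)} ≠ 1`. -/
theorem stmt_9 (N : ℕ) (hN : 2 ≤ N) (α β μ : ℂ)
    (ωpow : ℂ → ℂ) (hωpow : ∀ ζ : ℂ, ωpow ζ = Complex.exp (2 * Real.pi * I * ζ / N))
    (hpar1 : Complex.exp (2 * Real.pi * I * (μ - α)) ≠ 1)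
    (hpar2 : Complex.exp (2 * Real.pi * I * (μ + α)) ≠ 1)
    (K E F : (ZMod N → ℂ) →ₗ[ℂ] (ZMod N → ℂ))
    (hK : ∀ f n, K f n = ωpow (α - (ZMod.val n : ℂ)) * f n)
    (hE : ∀ f n, E f n =
      Complex.exp (Real.pi * I / N) * ωpow β *
        (ωpow μ - ωpow (α - (ZMod.val (n + 1) : ℂ))) * f (n + 1))
    (hF : ∀ f n, F f n =
      ωpow (-β) * (1 - ωpow (-μ - α + (ZMod.val (n - 1) : ℂ))) * f (n - 1))
    (p : Submodule ℂ (ZMod N → ℂ))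
    (hpK : ∀ f ∈ p, K f ∈ p) (hpE : ∀ f ∈ p, E f ∈ p) (hpF : ∀ f ∈ p, F f ∈ p) :
    p = ⊥ ∨ p = ⊤ := by
  classical
  have hNne : N ≠ 0 := by omega
  haveI : NeZero N := ⟨hNne⟩
  have hNc : (N : ℂ) ≠ 0 := Nat.cast_ne_zero.mpr hNne
  have h2pi : (2 : ℂ) * Real.pi * I ≠ 0 := Complex.two_pi_I_ne_zero
  by_cases hbot : p = ⊥
  · exact Or.inl hbot
  right
  -- a nonzero element of p
  obtain ⟨f, hf, hf0⟩ : ∃ f, f ∈ p ∧ f ≠ 0 := by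
    by_contra h
    push_neg at h
    exact hbot ((Submodule.eq_bot_iff p).mpr h)
  obtain ⟨n0, hn0⟩ : ∃ n, f n ≠ 0 := by
    by_contra h
    push_neg at h
    exact hf0 (funext h)
  set lam : ZMod N → ℂ := fun n => ωpow (α - (ZMod.val n : ℂ)) with hlam
  -- injectivity of eigenvalues
  have hinj : ∀ a b : ZMod N, lam a = lam b → a = b := by
    intro a b hab
    simp only [hlam, hωpow] at hab
    have h1 : Complex.exp (2 * Real.pi * I * (α - (ZMod.val a : ℂ)) / N -
        2 * Real.pi * I * (α - (ZMod.val b : ℂ)) / N) = 1 := by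
      rw [Complex.exp_sub, hab, div_self (Complex.exp_ne_zero _)]
    generalize hA : ((ZMod.val a : ℕ) : ℂ) = A at h1
    generalize hB : ((ZMod.val b : ℕ) : ℂ) = B at h1
    obtain ⟨k, hk⟩ := Complex.exp_eq_one_iff.mp h1
    have hk' : (2 * (Real.pi : ℂ) * I) * (B - A) =
        (2 * (Real.pi : ℂ) * I) * ((k : ℂ) * N) := by
      field_simp at hk
      linear_combination (2 * (Real.pi : ℂ) * I) * hk
    have h2 : B - A = (k : ℂ) * N := mul_left_cancel₀ h2pi hk'
    rw [← hA, ← hB] at h2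
    have h3 : (ZMod.val b : ℤ) - (ZMod.val a : ℤ) = k * N := by exact_mod_cast h2
    have ha' := ZMod.val_lt a
    have hb' := ZMod.val_lt b
    have hlt : |(ZMod.val b : ℤ) - (ZMod.val a : ℤ)| < N := abs_lt.mpr ⟨by omega, by omega⟩
    rw [h3, abs_mul, abs_of_nonneg (by positivity : (0:ℤ) ≤ (N:ℤ))] at hlt
    have hk0 : k = 0 := by
      have h5 : |k| < 1 := by
        have h4 : |k| * (N : ℤ) < 1 * N := by simpa using hlt
        exact lt_of_mul_lt_mul_right h4 (by positivity)
      rwa [Int.abs_lt_one_iff] at h5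
    rw [hk0, zero_mul] at h3
    have : ZMod.val a = ZMod.val b := by omega
    exact ZMod.val_injective N this
  -- extraction of basis vectors via polynomials in K
  have key : ∀ S : Finset (ZMod N), ∃ g ∈ p,
      ∀ n, g n = (∏ m ∈ S, (lam n - lam m)) * f n := by
    intro S
    refine Finset.induction_on S ⟨f, hf, fun n => by simp⟩ ?_
    rintro a S ha ⟨g, hg, hgn⟩
    refine ⟨K g - lam a • g, sub_mem (hpK g hg) (Submodule.smul_mem p _ hg), fun n => ?_⟩
    have h1 : (K g - lam a • g) n = lam n * g n - lam a * g n := by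
      simp [hK, hlam]
    rw [h1, hgn n, Finset.prod_insert ha]
    ring
  set e : ZMod N → (ZMod N → ℂ) := fun j => Pi.single j (1 : ℂ) with he
  have hen0 : e n0 ∈ p := by
    obtain ⟨g, hg, hgn⟩ := key (Finset.univ.erase n0)
    set c : ℂ := ∏ m ∈ Finset.univ.erase n0, (lam n0 - lam m) with hc
    have hcne : c ≠ 0 := by
      rw [hc]
      apply Finset.prod_ne_zero_iff.mpr
      intro m hm
      exact sub_ne_zero.mpr fun h => (Finset.mem_erase.mp hm).1 (hinj m n0 h.symm)
    have hgeq : g = (c * f n0) • e n0 := by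
      funext n
      by_cases h : n = n0
      · subst h
        simp [he, hgn n, Pi.single_eq_same, hc, mul_comm]
      · have hz : (∏ m ∈ Finset.univ.erase n0, (lam n - lam m)) = 0 :=
          Finset.prod_eq_zero (Finset.mem_erase.mpr ⟨h, Finset.mem_univ n⟩) (sub_self _)
        rw [hgn n, hz]
        simp [he, Pi.single_eq_of_ne h]
    have h1 := Submodule.smul_mem p (c * f n0)⁻¹ hg
    rw [hgeq, smul_smul, inv_mul_cancel₀ (mul_ne_zero hcne hn0), one_smul] at h1
    exact h1
  -- F shifts basis vectors with nonzero coefficient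
  have hstep : ∀ j : ZMod N, e j ∈ p → e (j + 1) ∈ p := by
    intro j hj
    set c : ℂ := ωpow (-β) * (1 - ωpow (-μ - α + (ZMod.val j : ℂ))) with hc
    have hcne : c ≠ 0 := by
      rw [hc]
      apply mul_ne_zero
      · rw [hωpow]; exact Complex.exp_ne_zero _
      · intro h
        have h1 : ωpow (-μ - α + (ZMod.val j : ℂ)) = 1 := (sub_eq_zero.mp h).symm
        rw [hωpow] at h1
        generalize hJ : ((ZMod.val j : ℕ) : ℂ) = J at h1
        obtain ⟨k, hk⟩ := Complex.exp_eq_one_iff.mp h1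
        apply hpar2
        rw [Complex.exp_eq_one_iff]
        refine ⟨(ZMod.val j : ℤ) - k * N, ?_⟩
        have hk' : (2 * (Real.pi : ℂ) * I) * (-μ - α + J) =
            (2 * (Real.pi : ℂ) * I) * ((k : ℂ) * N) := by
          field_simp at hk
          linear_combination (2 * (Real.pi : ℂ) * I) * hk
        have h2 : -μ - α + J = (k : ℂ) * N := mul_left_cancel₀ h2pi hk'
        push_cast
        rw [hJ]
        linear_combination (-(2 : ℂ) * Real.pi * I) * h2
    have hFe : F (e j) = c • e (j + 1) := by
      funext n
      by_cases h : n = j + 1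
      · subst h
        have h1 : j + 1 - 1 = j := by ring
        rw [hF, h1]
        simp [he, Pi.single_eq_same, hc]
      · have h2 : n - 1 ≠ j := fun hh => h (by rw [← hh]; ring)
        rw [hF]
        simp [he, Pi.single_eq_of_ne h2, Pi.single_eq_of_ne h]
    have h1 := Submodule.smul_mem p c⁻¹ (hpF _ hj)
    rw [hFe, smul_smul, inv_mul_cancel₀ hcne, one_smul] at h1
    exact h1
  have hall : ∀ j : ZMod N, e j ∈ p := by
    have hnat : ∀ k : ℕ, e (n0 + (k : ZMod N)) ∈ p := by
      intro k
      induction k with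
      | zero => simpa using hen0
      | succ k ih =>
        have := hstep _ ih
        have harg : n0 + ((k : ZMod N) + 1) = n0 + (k : ZMod N) + 1 := by ring
        rw [Nat.cast_succ, harg]
        exact this
    intro j
    have h1 := hnat (ZMod.val (j - n0))
    rwa [ZMod.natCast_rightInverse (j - n0), add_sub_cancel] at h1
  rw [Submodule.eq_top_iff']
  intro g
  have hg : g = ∑ j : ZMod N, g j • e j := by
    funext n
    simp [he, Finset.sum_apply, Pi.single_apply]
  rw [hg]
  exact Submodule.sum_mem p fun j _ => Submodule.smul_mem p _ (hall j)
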